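/- Let J(z) be a skew-symmetric linear operator for each z (i.e., ⟨x, J(z)y⟩ = -⟨y, J(z)x⟩), and consider the Poisson time integrator zⁿ⁺¹ = zⁿ + Δt J((zⁿ+zⁿ⁺¹)/2) ∂̄H, where ∂̄H = ∫₀¹ ∇H(zⁿ + s(zⁿ⁺¹-zⁿ)) ds is the averaged gradient. Then the scheme conserves the Hamiltonian exactly: H(zⁿ⁺¹) = H(zⁿ). -/

import Mathlib

open scoped RealInnerProductSpace

/-- The Poisson time integrator conserves the Hamiltonian exactly: if `J(z)` is
skew-symmetric for each `z` and `zⁿ⁺¹ = zⁿ + Δt J((zⁿ+zⁿ⁺¹)/2) ∂̄H`, where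
`∂̄H = ∫₀¹ ∇H(zⁿ + s(zⁿ⁺¹-zⁿ)) ds` is the averaged gradient, then `H(zⁿ⁺¹) = H(zⁿ)`. -/
theorem poisson_integrator_conserves_hamiltonian
    {V : Type*} [NormedAddCommGroup V] [InnerProductSpace ℝ V] [FiniteDimensional ℝ V]
    (J : V → V →ₗ[ℝ] V)
    (hskew : ∀ z x y, ⟪x, J z y⟫ = -⟪y, J z x⟫)
    (H : V → ℝ) (hH : ContDiff ℝ 1 H)
    (Δt : ℝ) (zn zn1 : V)
    (hscheme : zn1 = zn +
      Δt • J ((1 / 2 : ℝ) • (zn + zn1))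
        (∫ s in (0:ℝ)..1, gradient H (zn + s • (zn1 - zn)))) :
    H zn1 = H zn := by
  let v : V := zn1 - zn
  let g : ℝ → V := fun s => gradient H (zn + s • v)
  have hgradc : Continuous (gradient H) := by
    have h1 : Continuous (fderiv ℝ H) := hH.continuous_fderiv one_ne_zero
    exact (InnerProductSpace.toDual ℝ V).symm.continuous.comp h1
  have hgc : Continuous g :=
    hgradc.comp (continuous_const.add (continuous_id.smul continuous_const))
  have hgint : IntervalIntegrable g MeasureTheory.volume 0 1 :=
    hgc.intervalIntegrable 0 1
  have hderiv : ∀ s : ℝ, HasDerivAt (fun t => H (zn + t • v)) ⟪g s, v⟫ s := by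
    intro s
    have hgrad : HasGradientAt H (gradient H (zn + s • v)) (zn + s • v) :=
      ((hH.differentiable one_ne_zero) (zn + s • v)).hasGradientAt
    have hline : HasDerivAt (fun t : ℝ => zn + t • v) v s := by
      simpa using ((hasDerivAt_id s).smul_const v).const_add zn
    have := hgrad.hasFDerivAt.comp_hasDerivAt s hline
    simp [g, gradient, InnerProductSpace.toDual_symm_apply, real_inner_comm] at this ⊢
    exact this
  have hFTC : H (zn + (1:ℝ) • v) - H (zn + (0:ℝ) • v) = ∫ s in (0:ℝ)..1, ⟪g s, v⟫ := by
    rw [intervalIntegral.integral_eq_sub_of_hasDerivAt (fun s _ => hderiv s)]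
    exact (hgc.inner continuous_const).intervalIntegrable 0 1
  have hswap : (∫ s in (0:ℝ)..1, ⟪g s, v⟫) = ⟪∫ s in (0:ℝ)..1, g s, v⟫ := by
    have := ((innerSL ℝ (E := V)).flip v).intervalIntegral_comp_comm hgint (a := 0) (b := 1)
    simp [real_inner_comm] at this ⊢
    exact this
  have hdiff : H zn1 - H zn = ⟪∫ s in (0:ℝ)..1, g s, v⟫ := by
    have h1 : zn + (1:ℝ) • v = zn1 := by simp [v]
    have h0 : zn + (0:ℝ) • v = zn := by simp
    rw [h1, h0] at hFTC
    exact hFTC.trans hswap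
  have hveq : v = Δt • J ((1 / 2 : ℝ) • (zn + zn1)) (∫ s in (0:ℝ)..1, g s) := by
    show zn1 - zn = _
    conv_lhs => rw [hscheme]
    exact add_sub_cancel_left zn _
  have hzero : ⟪∫ s in (0:ℝ)..1, g s, v⟫ = 0 := by
    rw [hveq, real_inner_smul_right]
    have hs := hskew ((1 / 2 : ℝ) • (zn + zn1)) (∫ s in (0:ℝ)..1, g s) (∫ s in (0:ℝ)..1, g s)
    have h0 : ⟪∫ s in (0:ℝ)..1, g s, J ((1 / 2 : ℝ) • (zn + zn1)) (∫ s in (0:ℝ)..1, g s)⟫ = 0 := by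
      linarith
    rw [h0, mul_zero]
  rw [hzero] at hdiff
  linarith
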